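/- Let g be a nilpotent Lie algebra with Z(g) = [g,g] of even dimension, such that ad_x : g → [g,g] is surjective for every x ∉ Z(g). Then for every integrable complex structure J on g, the centre Z(g) is J-invariant. -/

import Mathlib

/-- For a nilpotent Lie algebra with `Z(g) = [g,g]` of even dimension, such that `ad_x`
surjects onto `[g,g]` for every non-central `x`, the centre is invariant under every
integrable complex structure. -/
theorem stmt_17 (g : Type*) [LieRing g] [LieAlgebra ℝ g] [LieRing.IsNilpotent g]
    [Module.Finite ℝ g]
    (hZC : (LieAlgebra.center ℝ g : Submodule ℝ g) =
      (LieAlgebra.derivedSeries ℝ g 1 : Submodule ℝ g))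
    (heven : Even (Module.finrank ℝ (LieAlgebra.center ℝ g : Submodule ℝ g)))
    (hsurj : ∀ x : g, x ∉ LieAlgebra.center ℝ g →
      ∀ c ∈ LieAlgebra.derivedSeries ℝ g 1, ∃ y : g, ⁅x, y⁆ = c)
    (J : g →ₗ[ℝ] g) (hJ : J ∘ₗ J = -LinearMap.id)
    (hint : ∀ x y : g, ⁅x, y⁆ - ⁅J x, J y⁆ + J ⁅J x, y⁆ + J ⁅x, J y⁆ = 0) :
    ∀ z ∈ LieAlgebra.center ℝ g, J z ∈ LieAlgebra.center ℝ g := by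
  intro z hz
  by_contra h
  have hzc : ∀ x : g, ⁅x, z⁆ = 0 := (LieModule.mem_maxTrivSubmodule ℝ g g z).mp hz
  -- key commutation relation from integrability
  have key : ∀ x : g, ⁅J z, J x⁆ = J ⁅J z, x⁆ := by
    intro x
    have h1 := hint x z
    rw [hzc x, hzc (J x), map_zero] at h1
    simp only [zero_sub, zero_add, add_zero] at h1
    have h2 : ⁅J x, J z⁆ = J ⁅x, J z⁆ := by
      have := neg_add_eq_zero.mp h1
      exact this
    rw [show ⁅J z, J x⁆ = -⁅J x, J z⁆ from (lie_skew (J z) (J x)).symm, h2,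
      ← map_neg, lie_skew]
  -- z lies in the derived series
  have hzD : z ∈ LieAlgebra.derivedSeries ℝ g 1 := by
    have : z ∈ (LieAlgebra.derivedSeries ℝ g 1 : Submodule ℝ g) := hZC ▸ hz
    exact this
  obtain ⟨y, hy⟩ := hsurj (J z) h z hzD
  have hmem : ⁅J z, J y⁆ ∈ LieAlgebra.derivedSeries ℝ g 1 := by
    rw [LieAlgebra.derivedSeries_def, LieAlgebra.derivedSeriesOfIdeal_succ,
      LieAlgebra.derivedSeriesOfIdeal_zero]
    exact LieSubmodule.lie_mem_lie (LieSubmodule.mem_top _) (LieSubmodule.mem_top _)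
  have : J z ∈ (LieAlgebra.center ℝ g : Submodule ℝ g) := by
    rw [hZC]
    have : J z = ⁅J z, J y⁆ := by rw [key y, hy]
    rw [this]
    exact hmem
  exact h this
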